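/- arXiv:2207.06250 — 3 statements merged into one kernel-verified Lean document; each statement's English description precedes it below -/
import Mathlib

section
/- Fix α > 1, 0 < r < 2^{−α}, and for i ≥ 0 set r_i = r·2^{−i/n}. Let {q_i} ⊂ B_1 \ {0} satisfy |q_i|^α > 2^α·r_i for all i, and let E = ⋃_{i≥0} B_{r_i}(q_i) ⊂ ℝⁿ (n ≥ 2). Then the origin is a point of density 0 for E: lim_{ρ→0} |E ∩ B_ρ|/(ω_n ρⁿ) = 0. In fact |E ∩ B_ρ|/(ω_n ρⁿ) ≤ 2·ρ^{n(α−1)} for 0 < ρ < r. -/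
open MeasureTheory Metric Set Filter Topology Real

/-- The union `E = ⋃ᵢ B_{rᵢ}(qᵢ)` with `rᵢ = r 2^{−i/n}`, `qᵢ ∈ B₁ \ {0}`,
`|qᵢ|^α > 2^α rᵢ`, has density 0 at the origin; in fact
`|E ∩ B_ρ|/(ωₙ ρⁿ) ≤ 2 ρ^{n(α−1)}` for `0 < ρ < r`. -/
theorem stmt_16 (n : ℕ) (hn : 2 ≤ n) (α r : ℝ) (hα : 1 < α)
    (hr0 : 0 < r) (hr : r < (2 : ℝ) ^ (-α))
    (q : ℕ → EuclideanSpace ℝ (Fin n))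
    (hq1 : ∀ i, q i ∈ ball (0 : EuclideanSpace ℝ (Fin n)) 1)
    (hq0 : ∀ i, q i ≠ 0)
    (hqr : ∀ i : ℕ, (2 : ℝ) ^ α * (r * (2 : ℝ) ^ (-(i : ℝ) / n)) < ‖q i‖ ^ α) :
    Tendsto
        (fun ρ : ℝ =>
          volume ((⋃ i, ball (q i) (r * (2 : ℝ) ^ (-(i : ℝ) / n))) ∩ ball 0 ρ) /
            volume (ball (0 : EuclideanSpace ℝ (Fin n)) ρ))
        (𝓝[>] (0 : ℝ)) (𝓝 0) ∧
      ∀ ρ : ℝ, 0 < ρ → ρ < r →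
        (volume ((⋃ i, ball (q i) (r * (2 : ℝ) ^ (-(i : ℝ) / n))) ∩ ball 0 ρ)).toReal /
            (volume (ball (0 : EuclideanSpace ℝ (Fin n)) ρ)).toReal ≤
          2 * ρ ^ ((n : ℝ) * (α - 1)) := by
  have hn' : (0:ℝ) < (n:ℝ) := by
    have : 0 < n := lt_of_lt_of_le (by norm_num) hn
    exact_mod_cast this
  have hα0 : 0 < α := by linarith
  have h2α : (2:ℝ)^(-α) < 1 := Real.rpow_lt_one_of_one_lt_of_neg one_lt_two (by linarith)
  have hr1 : r < 1 := hr.trans h2α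
  have hripos : ∀ i : ℕ, 0 < r * (2:ℝ)^(-(i:ℝ)/n) := fun i => by positivity
  have hrile : ∀ i : ℕ, r * (2:ℝ)^(-(i:ℝ)/n) ≤ r := by
    intro i
    have hexp : -(i:ℝ)/(n:ℝ) ≤ 0 := by
      apply div_nonpos_of_nonpos_of_nonneg
      · simp
      · exact hn'.le
    have h1 : (2:ℝ)^(-(i:ℝ)/n) ≤ 1 := Real.rpow_le_one_of_one_le_of_nonpos one_le_two hexp
    nlinarith [Real.rpow_pos_of_pos (by norm_num : (0:ℝ) < 2) (-(i:ℝ)/n)]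
  -- key geometric observation: intersecting balls have small radii
  have hS : ∀ ρ : ℝ, 0 < ρ → ∀ i : ℕ,
      (ball (q i) (r * (2:ℝ)^(-(i:ℝ)/n)) ∩ ball (0:EuclideanSpace ℝ (Fin n)) ρ).Nonempty →
      r * (2:ℝ)^(-(i:ℝ)/n) < ρ ^ α := by
    rintro ρ hρ i ⟨x, hx1, hx2⟩
    set s := r * (2:ℝ)^(-(i:ℝ)/n) with hs_def
    have hs0 : 0 < s := hripos i
    have hs1 : s < 1 := lt_of_le_of_lt (hrile i) hr1
    have hqub : ‖q i‖ < ρ + s := by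
      have h1 : dist x (q i) < s := mem_ball.mp hx1
      have h2 : ‖x‖ < ρ := by simpa [dist_eq_norm] using mem_ball.mp hx2
      have h1' : ‖q i - x‖ < s := by rwa [← dist_eq_norm, dist_comm]
      have h3 : ‖q i‖ ≤ ‖q i - x‖ + ‖x‖ := by
        simpa using norm_add_le (q i - x) x
      linarith
    have hqpos : 0 < ‖q i‖ := norm_pos_iff.mpr (hq0 i)
    have h3 : ((2:ℝ)^α * s) ^ (α⁻¹) < (‖q i‖ ^ α) ^ (α⁻¹) :=
      Real.rpow_lt_rpow (by positivity) (hqr i) (by positivity)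
    have h4 : (‖q i‖ ^ α) ^ (α⁻¹) = ‖q i‖ := by
      rw [← Real.rpow_mul hqpos.le, mul_inv_cancel₀ (ne_of_gt hα0), Real.rpow_one]
    have h5 : ((2:ℝ)^α * s) ^ (α⁻¹) = 2 * s ^ (α⁻¹) := by
      rw [Real.mul_rpow (by positivity) hs0.le, ← Real.rpow_mul (by norm_num : (0:ℝ) ≤ 2),
        mul_inv_cancel₀ (ne_of_gt hα0), Real.rpow_one]
    have h6 : s ≤ s ^ (α⁻¹) := by
      have hinv : α⁻¹ ≤ 1 := by
        rw [inv_le_one_iff₀]; right; exact hα.le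
      calc s = s ^ (1:ℝ) := (Real.rpow_one s).symm
        _ ≤ s ^ (α⁻¹) := Real.rpow_le_rpow_of_exponent_ge hs0 hs1.le hinv
    have h7 : s ^ (α⁻¹) < ρ := by
      rw [h4, h5] at h3
      linarith
    have h8 : (s ^ (α⁻¹)) ^ α < ρ ^ α := Real.rpow_lt_rpow (by positivity) h7 hα0
    rwa [← Real.rpow_mul hs0.le, inv_mul_cancel₀ (ne_of_gt hα0), Real.rpow_one] at h8
  -- ball volume formula
  have hball : ∀ (x : EuclideanSpace ℝ (Fin n)) (s : ℝ), 0 ≤ s →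
      volume (ball x s) = ENNReal.ofReal (s ^ n) * volume (ball (0:EuclideanSpace ℝ (Fin n)) 1) := by
    intro x s hs
    haveI : Nontrivial (EuclideanSpace ℝ (Fin n)) := by
      apply Module.nontrivial_of_finrank_pos (R := ℝ)
      rw [finrank_euclideanSpace_fin]
      omega
    rw [Measure.addHaar_ball volume x hs, finrank_euclideanSpace_fin]
  -- radii powers
  have hpow : ∀ j : ℕ, (r * (2:ℝ)^(-(j:ℝ)/n))^n = r^n * (2:ℝ)^(-(j:ℝ)) := by
    intro j
    rw [mul_pow, ← Real.rpow_natCast ((2:ℝ)^(-(j:ℝ)/n)) n,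
      ← Real.rpow_mul (by norm_num : (0:ℝ) ≤ 2), div_mul_cancel₀ _ (ne_of_gt hn')]
  -- main measure estimate
  have key : ∀ ρ : ℝ, 0 < ρ →
      volume ((⋃ i, ball (q i) (r * (2:ℝ)^(-(i:ℝ)/n))) ∩ ball (0:EuclideanSpace ℝ (Fin n)) ρ)
        ≤ ENNReal.ofReal (2 * ρ ^ ((n:ℝ)*(α-1))) * volume (ball (0:EuclideanSpace ℝ (Fin n)) ρ) := by
    intro ρ hρ
    by_cases hex : ∃ i : ℕ, r * (2:ℝ)^(-(i:ℝ)/n) < ρ ^ α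
    · set i₀ := Nat.find hex with hi₀
      have hi₀S : r * (2:ℝ)^(-(i₀:ℝ)/n) < ρ ^ α := Nat.find_spec hex
      have hsub : (⋃ i, ball (q i) (r * (2:ℝ)^(-(i:ℝ)/n))) ∩ ball (0:EuclideanSpace ℝ (Fin n)) ρ
          ⊆ ⋃ k : ℕ, ball (q (i₀+k)) (r * (2:ℝ)^(-((i₀+k:ℕ):ℝ)/n)) := by
        rintro x ⟨hxE, hxρ⟩
        simp only [mem_iUnion] at hxE ⊢
        obtain ⟨i, hxi⟩ := hxE
        have hiS : r * (2:ℝ)^(-(i:ℝ)/n) < ρ^α := hS ρ hρ i ⟨x, hxi, hxρ⟩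
        have hle : i₀ ≤ i := Nat.find_min' hex hiS
        exact ⟨i - i₀, by rwa [Nat.add_sub_cancel' hle]⟩
      have hsummable : Summable (fun k : ℕ => r^n * (2:ℝ)^(-(i₀:ℝ)) * (1/2:ℝ)^k) :=
        (summable_geometric_of_lt_one (by norm_num) (by norm_num)).mul_left _
      have hterm : ∀ k : ℕ, (r * (2:ℝ)^(-((i₀+k:ℕ):ℝ)/n))^n
          = r^n * (2:ℝ)^(-(i₀:ℝ)) * (1/2:ℝ)^k := by
        intro k
        rw [hpow]
        push_cast
        rw [neg_add, Real.rpow_add (by norm_num : (0:ℝ) < 2), mul_assoc]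
        congr 1
        rw [one_div, inv_pow, ← Real.rpow_natCast (2:ℝ) k,
          ← Real.rpow_neg (by norm_num : (0:ℝ) ≤ 2)]
      have htsum : ∑' k : ℕ, r^n * (2:ℝ)^(-(i₀:ℝ)) * (1/2:ℝ)^k
          = 2 * (r^n * (2:ℝ)^(-(i₀:ℝ))) := by
        rw [tsum_mul_left, tsum_geometric_two]
        ring
      have hri0 : r^n * (2:ℝ)^(-(i₀:ℝ)) ≤ (ρ^α)^n := by
        have := pow_le_pow_left₀ (hripos i₀).le hi₀S.le n
        rwa [hpow] at this
      have hfinal_real : 2 * (r^n * (2:ℝ)^(-(i₀:ℝ))) ≤ (2 * ρ ^ ((n:ℝ)*(α-1))) * ρ^n := by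
        have h1 : (ρ^α)^n = ρ ^ ((n:ℝ)*(α-1)) * ρ^n := by
          rw [← Real.rpow_natCast (ρ^α) n, ← Real.rpow_mul hρ.le,
            ← Real.rpow_natCast ρ n, ← Real.rpow_add hρ]
          congr 1
          ring
        nlinarith [hri0]
      calc volume ((⋃ i, ball (q i) (r * (2:ℝ)^(-(i:ℝ)/n))) ∩ ball (0:EuclideanSpace ℝ (Fin n)) ρ)
          ≤ volume (⋃ k : ℕ, ball (q (i₀+k)) (r * (2:ℝ)^(-((i₀+k:ℕ):ℝ)/n))) := measure_mono hsub
        _ ≤ ∑' k : ℕ, volume (ball (q (i₀+k)) (r * (2:ℝ)^(-((i₀+k:ℕ):ℝ)/n))) := measure_iUnion_le _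
        _ = (∑' k : ℕ, ENNReal.ofReal ((r * (2:ℝ)^(-((i₀+k:ℕ):ℝ)/n))^n))
              * volume (ball (0:EuclideanSpace ℝ (Fin n)) 1) := by
            rw [← ENNReal.tsum_mul_right]
            congr 1
            ext k
            rw [hball _ _ (hripos (i₀+k)).le]
        _ = ENNReal.ofReal (2 * (r^n * (2:ℝ)^(-(i₀:ℝ))))
              * volume (ball (0:EuclideanSpace ℝ (Fin n)) 1) := by
            congr 1
            rw [← htsum, ENNReal.ofReal_tsum_of_nonneg (fun k => by positivity) hsummable]
            congr 1
            ext k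
            rw [hterm]
        _ ≤ ENNReal.ofReal ((2 * ρ ^ ((n:ℝ)*(α-1))) * ρ^n)
              * volume (ball (0:EuclideanSpace ℝ (Fin n)) 1) := by
            exact mul_le_mul_left (ENNReal.ofReal_le_ofReal hfinal_real) _
        _ = ENNReal.ofReal (2 * ρ ^ ((n:ℝ)*(α-1)))
              * volume (ball (0:EuclideanSpace ℝ (Fin n)) ρ) := by
            rw [hball 0 ρ hρ.le, ENNReal.ofReal_mul (by positivity), mul_assoc]
    · have hempty : (⋃ i, ball (q i) (r * (2:ℝ)^(-(i:ℝ)/n)))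
          ∩ ball (0:EuclideanSpace ℝ (Fin n)) ρ = ∅ := by
        rw [eq_empty_iff_forall_notMem]
        rintro x ⟨hxE, hxρ⟩
        simp only [mem_iUnion] at hxE
        obtain ⟨i, hxi⟩ := hxE
        exact hex ⟨i, hS ρ hρ i ⟨x, hxi, hxρ⟩⟩
      rw [hempty]
      simp
  have hB0 : ∀ ρ : ℝ, 0 < ρ → volume (ball (0:EuclideanSpace ℝ (Fin n)) ρ) ≠ 0 :=
    fun ρ hρ => (measure_ball_pos volume 0 hρ).ne'
  have hBtop : ∀ ρ : ℝ, volume (ball (0:EuclideanSpace ℝ (Fin n)) ρ) ≠ ⊤ :=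
    fun ρ => measure_ball_lt_top.ne
  constructor
  · -- Tendsto
    have hub : ∀ᶠ ρ in 𝓝[>] (0:ℝ),
        volume ((⋃ i, ball (q i) (r * (2:ℝ)^(-(i:ℝ)/n))) ∩ ball (0:EuclideanSpace ℝ (Fin n)) ρ) /
          volume (ball (0:EuclideanSpace ℝ (Fin n)) ρ)
          ≤ ENNReal.ofReal (2 * ρ ^ ((n:ℝ)*(α-1))) := by
      filter_upwards [self_mem_nhdsWithin] with ρ hρ
      exact ENNReal.div_le_of_le_mul (key ρ hρ)
    have hlim : Tendsto (fun ρ : ℝ => ENNReal.ofReal (2 * ρ ^ ((n:ℝ)*(α-1))))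
        (𝓝[>] (0:ℝ)) (𝓝 0) := by
      have hc : (0:ℝ) < (n:ℝ)*(α-1) := by nlinarith
      have h1 : Tendsto (fun ρ : ℝ => 2 * ρ ^ ((n:ℝ)*(α-1))) (𝓝 (0:ℝ)) (𝓝 0) := by
        have := (Real.continuousAt_rpow_const 0 ((n:ℝ)*(α-1)) (Or.inr hc.le)).tendsto
        rw [Real.zero_rpow hc.ne'] at this
        have h2 := this.const_mul (2:ℝ)
        simpa using h2
      have h3 : Tendsto (fun ρ : ℝ => 2 * ρ ^ ((n:ℝ)*(α-1))) (𝓝[>] (0:ℝ)) (𝓝 0) :=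
        h1.mono_left nhdsWithin_le_nhds
      have h4 := (ENNReal.continuous_ofReal.tendsto 0).comp h3
      rw [ENNReal.ofReal_zero] at h4
      exact h4
    exact tendsto_of_tendsto_of_tendsto_of_le_of_le' tendsto_const_nhds hlim
      (Eventually.of_forall fun ρ => zero_le) hub
  · -- quantitative bound
    intro ρ hρ0 hρr
    have hA := key ρ hρ0
    have hAfin : volume ((⋃ i, ball (q i) (r * (2:ℝ)^(-(i:ℝ)/n)))
        ∩ ball (0:EuclideanSpace ℝ (Fin n)) ρ) ≠ ⊤ := by
      exact (lt_of_le_of_lt (measure_mono inter_subset_right) measure_ball_lt_top).ne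
    have hBpos : 0 < (volume (ball (0:EuclideanSpace ℝ (Fin n)) ρ)).toReal :=
      ENNReal.toReal_pos (hB0 ρ hρ0) (hBtop ρ)
    rw [div_le_iff₀ hBpos]
    have h1 : (volume ((⋃ i, ball (q i) (r * (2:ℝ)^(-(i:ℝ)/n)))
        ∩ ball (0:EuclideanSpace ℝ (Fin n)) ρ)).toReal
        ≤ (ENNReal.ofReal (2 * ρ ^ ((n:ℝ)*(α-1)))
            * volume (ball (0:EuclideanSpace ℝ (Fin n)) ρ)).toReal := by
      apply ENNReal.toReal_mono _ hA
      exact ENNReal.mul_ne_top ENNReal.ofReal_ne_top (hBtop ρ)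
    rwa [ENNReal.toReal_mul, ENNReal.toReal_ofReal (by positivity)] at h1
end

section
/- Let n ≥ 2, p < 0 with n − 1 + p < 0, α > 1 chosen so that n − 1 + p/α > n − 1 + p (e.g. any α > 1). With E = ⋃_{i≥0} B_{r_i}(q_i) as above (r_i = r·2^{−i/n}, |q_i|^α > 2^α r_i, q_i ∈ B_1), one has Σ_{i≥0} ∫_{∂B_{r_i}(q_i)} |x|^p dH^{n−1} ≤ C(n, α, p)·r^{n−1+p/α}, where C depends only on n, α, p. -/
set_option maxHeartbeats 1000000

open MeasureTheory Metric Set Real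
open scoped Pointwise ENNReal NNReal


lemma aux_lipschitz_norml (E : Type*) [NormedAddCommGroup E] [NormedSpace ℝ E] :
    LipschitzOnWith 2 (fun x : E => ‖x‖⁻¹ • x) {x : E | 1 ≤ ‖x‖} := by
  rw [lipschitzOnWith_iff_dist_le_mul]
  intro x hx y hy
  simp only [mem_setOf_eq] at hx hy
  have hx0 : (0:ℝ) < ‖x‖ := lt_of_lt_of_le one_pos hx
  have hy0 : (0:ℝ) < ‖y‖ := lt_of_lt_of_le one_pos hy
  have key : ‖x‖⁻¹ • x - ‖y‖⁻¹ • y = ‖x‖⁻¹ • (x - y) + (‖x‖⁻¹ - ‖y‖⁻¹) • y := by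
    rw [smul_sub, sub_smul]; abel
  rw [dist_eq_norm, dist_eq_norm, key]
  have h1 : ‖‖x‖⁻¹ • (x - y)‖ ≤ ‖x - y‖ := by
    rw [norm_smul, norm_inv, norm_norm]
    calc ‖x‖⁻¹ * ‖x - y‖ ≤ 1 * ‖x - y‖ := by
          apply mul_le_mul_of_nonneg_right _ (norm_nonneg _)
          exact inv_le_one_of_one_le₀ hx
      _ = ‖x - y‖ := one_mul _
  have h2 : ‖(‖x‖⁻¹ - ‖y‖⁻¹) • y‖ ≤ ‖x - y‖ := by
    rw [norm_smul, Real.norm_eq_abs]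
    have he : ‖x‖⁻¹ - ‖y‖⁻¹ = (‖y‖ - ‖x‖) / (‖x‖ * ‖y‖) := by
      field_simp
    rw [he, abs_div, abs_mul, abs_of_pos hx0, abs_of_pos hy0]
    have hstep : |‖y‖ - ‖x‖| / (‖x‖ * ‖y‖) * ‖y‖ = |‖y‖ - ‖x‖| / ‖x‖ := by
      field_simp
    rw [hstep]
    calc |‖y‖ - ‖x‖| / ‖x‖ ≤ |‖y‖ - ‖x‖| := div_le_self (abs_nonneg _) hx
      _ ≤ ‖y - x‖ := abs_norm_sub_norm_le _ _
      _ = ‖x - y‖ := norm_sub_rev _ _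
  calc ‖‖x‖⁻¹ • (x - y) + (‖x‖⁻¹ - ‖y‖⁻¹) • y‖
      ≤ ‖‖x‖⁻¹ • (x - y)‖ + ‖(‖x‖⁻¹ - ‖y‖⁻¹) • y‖ := norm_add_le _ _
    _ ≤ ‖x - y‖ + ‖x - y‖ := add_le_add h1 h2
    _ = (2:ℝ≥0) * ‖x - y‖ := by push_cast; ring

lemma aux_abs_coord_le_norm {k : ℕ} (x : EuclideanSpace ℝ (Fin k)) (i : Fin k) :
    |x i| ≤ ‖x‖ := by
  rw [EuclideanSpace.norm_eq]
  have h1 : |x i| = Real.sqrt (‖x i‖ ^ 2) := by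
    rw [Real.sqrt_sq (norm_nonneg _), Real.norm_eq_abs]
  rw [h1]
  exact Real.sqrt_le_sqrt (Finset.single_le_sum (f := fun j => ‖x j‖ ^ 2)
    (fun _ _ => sq_nonneg _) (Finset.mem_univ i))



lemma aux_sphere_hausdorff_lt_top (m : ℕ) :
    μH[(m : ℝ)] (sphere (0 : EuclideanSpace ℝ (Fin (m+1))) 1) < ⊤ := by
  set P : EuclideanSpace ℝ (Fin (m+1)) → EuclideanSpace ℝ (Fin (m+1)) :=
    fun x => ‖x‖⁻¹ • x with hP
  set B : Set (Fin m → ℝ) := closedBall 0 (Real.sqrt ((m:ℝ)+1)) with hB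
  set hmap : Fin (m+1) → ℝ → (Fin m → ℝ) → EuclideanSpace ℝ (Fin (m+1)) :=
    fun j ε y => (WithLp.equiv 2 (Fin (m+1) → ℝ)).symm (j.insertNth ε y) with hhmap
  have hlip : ∀ (j : Fin (m+1)) (ε : ℝ),
      LipschitzWith (Real.toNNReal (Real.sqrt ((m:ℝ)+1))) (hmap j ε) := by
    intro j ε
    apply LipschitzWith.of_dist_le_mul
    intro y y'
    have hd : dist (hmap j ε y) (hmap j ε y')
        = Real.sqrt (∑ i : Fin (m+1), dist ((j.insertNth ε y : Fin (m+1) → ℝ) i) ((j.insertNth ε y' : Fin (m+1) → ℝ) i) ^ 2) := by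
      rw [EuclideanSpace.dist_eq]
      congr 1
    rw [hd, Fin.sum_univ_succAbove
      (fun i => dist ((j.insertNth ε y : Fin (m+1) → ℝ) i) ((j.insertNth ε y' : Fin (m+1) → ℝ) i) ^ 2) j]
    simp only [Fin.insertNth_apply_same, Fin.insertNth_apply_succAbove, dist_self,
      ne_eq, OfNat.ofNat_ne_zero, not_false_eq_true, zero_pow, zero_add]
    have hbound : (∑ k : Fin m, dist (y k) (y' k) ^ 2) ≤ ((m:ℝ)+1) * dist y y' ^ 2 := by
      calc (∑ k : Fin m, dist (y k) (y' k) ^ 2) ≤ ∑ _k : Fin m, dist y y' ^ 2 :=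
            Finset.sum_le_sum fun k _ =>
              pow_le_pow_left₀ dist_nonneg (dist_le_pi_dist y y' k) 2
        _ = (m:ℝ) * dist y y' ^ 2 := by
            rw [Finset.sum_const, Finset.card_univ, Fintype.card_fin, nsmul_eq_mul]
        _ ≤ ((m:ℝ)+1) * dist y y' ^ 2 := by nlinarith [sq_nonneg (dist y y')]
    calc Real.sqrt (∑ k, dist (y k) (y' k) ^ 2)
        ≤ Real.sqrt (((m:ℝ)+1) * dist y y' ^ 2) := Real.sqrt_le_sqrt hbound
      _ = Real.sqrt ((m:ℝ)+1) * dist y y' := by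
          rw [Real.sqrt_mul (by positivity), Real.sqrt_sq dist_nonneg]
      _ = (Real.toNNReal (Real.sqrt ((m:ℝ)+1)) : ℝ) * dist y y' := by
          rw [Real.coe_toNNReal _ (Real.sqrt_nonneg _)]
  have hBfin : μH[(m:ℝ)] B < ⊤ := by
    have hμ : (μH[(m:ℝ)] : Measure (Fin m → ℝ)) = volume := by
      have := hausdorffMeasure_pi_real (ι := Fin m)
      simpa using this
    rw [hμ]
    exact (isCompact_closedBall _ _).measure_lt_top
  have hA : ∀ (j : Fin (m+1)) (ε : ℝ), |ε| = 1 →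
      (hmap j ε '' B) ⊆ {x : EuclideanSpace ℝ (Fin (m+1)) | 1 ≤ ‖x‖} := by
    rintro j ε hε z ⟨y, -, rfl⟩
    have h1 : (hmap j ε y) j = ε := by
      simp [hhmap, WithLp.equiv_symm_apply, Fin.insertNth_apply_same]
    have h2 := aux_abs_coord_le_norm (hmap j ε y) j
    rw [h1, hε] at h2
    exact h2
  have hTfin : ∀ (j : Fin (m+1)) (ε : ℝ), |ε| = 1 →
      μH[(m:ℝ)] (P '' (hmap j ε '' B)) < ⊤ := by
    intro j ε hε
    have hm0 : (0:ℝ) ≤ (m:ℝ) := Nat.cast_nonneg m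
    have l1 : μH[(m:ℝ)] (P '' (hmap j ε '' B))
        ≤ ((2:ℝ≥0) : ℝ≥0∞) ^ (m:ℝ) * μH[(m:ℝ)] (hmap j ε '' B) :=
      ((aux_lipschitz_norml (EuclideanSpace ℝ (Fin (m+1)))).mono
        (hA j ε hε)).hausdorffMeasure_image_le hm0
    have l2 : μH[(m:ℝ)] (hmap j ε '' B)
        ≤ ((Real.toNNReal (Real.sqrt ((m:ℝ)+1)) : ℝ≥0) : ℝ≥0∞) ^ (m:ℝ) * μH[(m:ℝ)] B :=
      (hlip j ε).hausdorffMeasure_image_le hm0 B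
    refine lt_of_le_of_lt (l1.trans (mul_le_mul_right l2 _)) ?_
    refine ENNReal.mul_lt_top ?_ (ENNReal.mul_lt_top ?_ hBfin)
    · exact (ENNReal.rpow_lt_top_of_nonneg hm0 ENNReal.coe_ne_top)
    · exact (ENNReal.rpow_lt_top_of_nonneg hm0 ENNReal.coe_ne_top)
  have hcover : sphere (0 : EuclideanSpace ℝ (Fin (m+1))) 1 ⊆
      ⋃ j : Fin (m+1), (P '' (hmap j 1 '' B) ∪ P '' (hmap j (-1) '' B)) := by
    intro u hu
    have hnorm : ‖u‖ = 1 := by simpa using mem_sphere_zero_iff_norm.1 hu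
    have hsum : (∑ i, u i ^ 2) = 1 := by
      have h := EuclideanSpace.norm_eq u
      rw [hnorm] at h
      have h2 : (∑ i, ‖u i‖ ^ 2) = 1 := Real.sqrt_eq_one.mp h.symm
      simpa [Real.norm_eq_abs, sq_abs] using h2
    obtain ⟨j, hj⟩ : ∃ j, 1/((m:ℝ)+1) ≤ u j ^ 2 := by
      by_contra hcon
      push_neg at hcon
      have hlt : (∑ i, u i ^ 2) < ∑ _i : Fin (m+1), 1/((m:ℝ)+1) :=
        Finset.sum_lt_sum_of_nonempty ⟨⟨0, Nat.succ_pos m⟩, Finset.mem_univ _⟩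
          (fun i _ => hcon i)
      have hs : (∑ _i : Fin (m+1), 1/((m:ℝ)+1)) = 1 := by
        rw [Finset.sum_const, Finset.card_univ, Fintype.card_fin, nsmul_eq_mul]
        push_cast
        field_simp
      rw [hsum, hs] at hlt
      exact lt_irrefl _ hlt
    set c := |u j| with hc
    have hjpos : (0:ℝ) < 1/((m:ℝ)+1) := by positivity
    have hune : u j ≠ 0 := by
      intro h0
      rw [h0] at hj
      simpa using lt_of_lt_of_le hjpos hj
    have hcpos : 0 < c := abs_pos.mpr hune
    have hcge : (Real.sqrt ((m:ℝ)+1))⁻¹ ≤ c := by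
      have h1 : Real.sqrt (1/((m:ℝ)+1)) ≤ Real.sqrt (u j ^ 2) := Real.sqrt_le_sqrt hj
      rwa [Real.sqrt_sq_eq_abs, one_div, Real.sqrt_inv] at h1
    set x : EuclideanSpace ℝ (Fin (m+1)) := c⁻¹ • u with hx
    have hxnorm : ‖x‖ = c⁻¹ := by
      rw [hx, norm_smul, norm_inv, Real.norm_eq_abs, abs_of_pos hcpos, hnorm, mul_one]
    set ε : ℝ := if 0 ≤ u j then 1 else -1 with hε
    have hxj : x j = ε := by
      have hxj' : x j = c⁻¹ * u j := by
        rw [hx]; simp [PiLp.smul_apply, smul_eq_mul]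
      rw [hxj', hε, hc]
      by_cases h0 : 0 ≤ u j
      · rw [if_pos h0, abs_of_nonneg h0, inv_mul_cancel₀ hune]
      · rw [if_neg h0, abs_of_neg (lt_of_not_ge h0), inv_neg, neg_mul,
          inv_mul_cancel₀ hune]
    set y : Fin m → ℝ := j.removeNth ((WithLp.equiv 2 (Fin (m+1) → ℝ)) x) with hy
    have hyB : y ∈ B := by
      rw [hB, mem_closedBall, dist_pi_le_iff (Real.sqrt_nonneg _)]
      intro k
      have hyk : y k = x (j.succAbove k) := by
        rw [hy]; simp [Fin.removeNth, WithLp.equiv_apply]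
      rw [hyk]
      have hd0 : dist (x (j.succAbove k)) ((0 : Fin m → ℝ) k) = |x (j.succAbove k)| := by
        simp [Real.dist_eq]
      rw [hd0]
      calc |x (j.succAbove k)| ≤ ‖x‖ := aux_abs_coord_le_norm x _
        _ = c⁻¹ := hxnorm
        _ ≤ Real.sqrt ((m:ℝ)+1) := by
            rw [← inv_inv (Real.sqrt ((m:ℝ)+1))]
            exact inv_anti₀ (by positivity) hcge
    have hmapx : hmap j ε y = x := by
      have h1 : j.insertNth ε y = (WithLp.equiv 2 (Fin (m+1) → ℝ)) x := by
        rw [← hxj]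
        exact Fin.insertNth_self_removeNth j _
      rw [hhmap]
      simp only []
      rw [h1, Equiv.symm_apply_apply]
    have hPx : P x = u := by
      rw [hP]
      simp only []
      rw [hxnorm, inv_inv, hx, smul_smul, mul_inv_cancel₀ (ne_of_gt hcpos), one_smul]
    refine mem_iUnion.2 ⟨j, ?_⟩
    by_cases h0 : 0 ≤ u j
    · left
      exact ⟨x, ⟨y, hyB, by rw [← hmapx, hε, if_pos h0]⟩, hPx⟩
    · right
      exact ⟨x, ⟨y, hyB, by rw [← hmapx, hε, if_neg h0]⟩, hPx⟩
  refine lt_of_le_of_lt (measure_mono hcover) ?_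
  refine lt_of_le_of_lt (measure_iUnion_le _) ?_
  rw [tsum_fintype]
  refine ENNReal.sum_lt_top.mpr (fun j _ => ?_)
  refine lt_of_le_of_lt (measure_union_le _ _) ?_
  exact ENNReal.add_lt_top.mpr ⟨hTfin j 1 (by norm_num), hTfin j (-1) (by norm_num)⟩



lemma aux_hausdorff_sphere_eq (n : ℕ) (q : EuclideanSpace ℝ (Fin n)) {ρ : ℝ} (hρ : 0 < ρ)
    {d : ℝ} (hd : 0 ≤ d) :
    μH[d] (sphere q ρ) = ENNReal.ofReal (ρ ^ d) *
      μH[d] (sphere (0 : EuclideanSpace ℝ (Fin n)) 1) := by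
  have h1 : sphere q ρ = q +ᵥ sphere (0 : EuclideanSpace ℝ (Fin n)) ρ := by
    rw [vadd_sphere, vadd_eq_add, add_zero]
  have h2 : sphere (0 : EuclideanSpace ℝ (Fin n)) ρ
      = ρ • sphere (0 : EuclideanSpace ℝ (Fin n)) 1 := by
    rw [smul_sphere' (ne_of_gt hρ), smul_zero, Real.norm_eq_abs, abs_of_pos hρ, mul_one]
  rw [h1, hausdorffMeasure_vadd _ (Or.inl hd), h2,
    MeasureTheory.Measure.hausdorffMeasure_smul₀ hd (ne_of_gt hρ)]
  have h3 : ((‖ρ‖₊ ^ d : ℝ≥0) : ℝ≥0∞) = ENNReal.ofReal (ρ ^ d) := by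
    rw [ENNReal.coe_rpow_of_nonneg _ hd, ← enorm_eq_nnnorm, Real.enorm_eq_ofReal hρ.le,
      ← ENNReal.ofReal_rpow_of_pos hρ]
  rw [← h3, ENNReal.smul_def, smul_eq_mul]

/-- Summing the weighted surface measures of the spheres `∂B_{rᵢ}(qᵢ)` with weight
`|x|^p`: `Σᵢ ∫_{∂B_{rᵢ}(qᵢ)} |x|^p dH^{n−1} ≤ C(n,α,p) r^{n−1+p/α}`. -/
theorem stmt_17 (n : ℕ) (hn : 2 ≤ n) (α p : ℝ) (hα : 1 < α) (hp : p < 0)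
    (hnp : (n : ℝ) - 1 + p < 0) (hconv : 0 < (n : ℝ) - 1 + p / α) :
    ∃ C : ℝ, 0 < C ∧
      ∀ r : ℝ, 0 < r → r < (2 : ℝ) ^ (-α) →
        ∀ q : ℕ → EuclideanSpace ℝ (Fin n),
          (∀ i, q i ∈ ball (0 : EuclideanSpace ℝ (Fin n)) 1) →
          (∀ i : ℕ, (2 : ℝ) ^ α * (r * (2 : ℝ) ^ (-(i : ℝ) / n)) < ‖q i‖ ^ α) →
          (∑' i : ℕ,
              ∫⁻ x in sphere (q i) (r * (2 : ℝ) ^ (-(i : ℝ) / n)),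
                ENNReal.ofReal (‖x‖ ^ p) ∂(μH[(n : ℝ) - 1])) ≤
            ENNReal.ofReal (C * r ^ ((n : ℝ) - 1 + p / α)) := by
  have hα0 : 0 < α := lt_trans one_pos hα
  have hn0 : (0:ℝ) < (n:ℝ) := by exact_mod_cast Nat.lt_of_lt_of_le Nat.zero_lt_two hn
  set β : ℝ := (n : ℝ) - 1 + p / α with hβ
  set S : ℝ≥0∞ := μH[(n : ℝ) - 1] (sphere (0 : EuclideanSpace ℝ (Fin n)) 1) with hSdef
  have hS : S < ⊤ := by
    rw [hSdef]
    obtain ⟨m, rfl⟩ : ∃ m, n = m + 1 := ⟨n - 1, by omega⟩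
    have hcast : ((m + 1 : ℕ) : ℝ) - 1 = (m : ℝ) := by push_cast; ring
    rw [hcast]
    exact aux_sphere_hausdorff_lt_top m
  set t : ℝ := (2 : ℝ) ^ (-(β / (n : ℝ))) with ht
  have ht0 : 0 < t := Real.rpow_pos_of_pos two_pos _
  have ht1 : t < 1 :=
    Real.rpow_lt_one_of_one_lt_of_neg one_lt_two (neg_lt_zero.mpr (div_pos hconv hn0))
  set K : ℝ≥0∞ := (1 - ENNReal.ofReal t)⁻¹ * S with hK
  have hKtop : K ≠ ⊤ := by
    apply ENNReal.mul_ne_top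
    · rw [ENNReal.inv_ne_top]
      exact ne_of_gt (tsub_pos_of_lt (ENNReal.ofReal_lt_one.2 ht1))
    · exact hS.ne
  refine ⟨K.toReal + 1, by positivity, ?_⟩
  intro r hr hr2 q hq1 hq2
  have hnd : (0:ℝ) ≤ (n:ℝ) - 1 := by
    have : (2:ℝ) ≤ (n:ℝ) := by exact_mod_cast hn
    linarith
  have hkey : ∀ i : ℕ,
      (∫⁻ x in sphere (q i) (r * (2:ℝ) ^ (-(i:ℝ)/n)),
          ENNReal.ofReal (‖x‖ ^ p) ∂(μH[(n:ℝ)-1]))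
        ≤ ENNReal.ofReal (r ^ β) * (ENNReal.ofReal t) ^ i * S := by
    intro i
    set ρ : ℝ := r * (2:ℝ) ^ (-(i:ℝ)/n) with hρdef
    have hρ : 0 < ρ := mul_pos hr (Real.rpow_pos_of_pos two_pos _)
    have hiexp : -(i:ℝ)/(n:ℝ) ≤ 0 := by
      apply div_nonpos_of_nonpos_of_nonneg _ hn0.le
      simp
    have hs1 : (2:ℝ) ^ (-(i:ℝ)/(n:ℝ)) ≤ 1 :=
      Real.rpow_le_one_of_one_le_of_nonpos one_le_two hiexp
    have hr1 : r ≤ 1 := by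
      refine le_trans hr2.le ?_
      exact Real.rpow_le_one_of_one_le_of_nonpos one_le_two (neg_nonpos.mpr hα0.le)
    have hρ1 : ρ ≤ 1 := by
      rw [hρdef]
      nlinarith [(Real.rpow_pos_of_pos two_pos (-(i:ℝ)/(n:ℝ)))]
    have hpt : ∀ x ∈ sphere (q i) ρ,
        ENNReal.ofReal (‖x‖ ^ p) ≤ ENNReal.ofReal (ρ ^ (p/α)) := by
      intro x hx
      apply ENNReal.ofReal_le_ofReal
      have hdist : dist x (q i) = ρ := mem_sphere.mp hx
      have hxlb : ‖q i‖ - ρ ≤ ‖x‖ := by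
        have h1 : ‖q i‖ - ‖x‖ ≤ dist (q i) x := by
          rw [dist_eq_norm]; exact norm_sub_norm_le _ _
        rw [dist_comm, hdist] at h1
        linarith
      have hqlb : 2 * ρ ^ (α⁻¹) < ‖q i‖ := by
        have h := hq2 i
        rw [← hρdef] at h
        have h2 : ((2:ℝ)^α * ρ) ^ (α⁻¹) < (‖q i‖ ^ α) ^ (α⁻¹) :=
          Real.rpow_lt_rpow (by positivity) h (by positivity)
        rw [Real.mul_rpow (by positivity) hρ.le,
          ← Real.rpow_mul (by norm_num : (0:ℝ) ≤ 2),
          ← Real.rpow_mul (norm_nonneg _),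
          mul_inv_cancel₀ (ne_of_gt hα0), Real.rpow_one, Real.rpow_one] at h2
        exact h2
      have hραρ : ρ ≤ ρ ^ (α⁻¹) := by
        have h1 : α⁻¹ ≤ 1 := by
          rw [inv_le_one_iff₀]
          right; exact hα.le
        have := Real.rpow_le_rpow_of_exponent_ge hρ hρ1 h1
        rwa [Real.rpow_one] at this
      have hxlb2 : ρ ^ (α⁻¹) ≤ ‖x‖ := by linarith
      have hρα : 0 < ρ ^ (α⁻¹) := Real.rpow_pos_of_pos hρ _
      calc ‖x‖ ^ p ≤ (ρ ^ (α⁻¹)) ^ p := Real.rpow_le_rpow_of_nonpos hρα hxlb2 hp.le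
        _ = ρ ^ (α⁻¹ * p) := (Real.rpow_mul hρ.le _ _).symm
        _ = ρ ^ (p/α) := by rw [inv_mul_eq_div]
    have hint : (∫⁻ x in sphere (q i) ρ, ENNReal.ofReal (‖x‖^p) ∂(μH[(n:ℝ)-1]))
        ≤ ENNReal.ofReal (ρ ^ (p/α)) * μH[(n:ℝ)-1] (sphere (q i) ρ) := by
      calc (∫⁻ x in sphere (q i) ρ, ENNReal.ofReal (‖x‖^p) ∂(μH[(n:ℝ)-1]))
          ≤ ∫⁻ _x in sphere (q i) ρ, ENNReal.ofReal (ρ ^ (p/α)) ∂(μH[(n:ℝ)-1]) :=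
            setLIntegral_mono measurable_const hpt
        _ = _ := setLIntegral_const _ _
    rw [aux_hausdorff_sphere_eq n (q i) hρ hnd] at hint
    refine hint.trans (le_of_eq ?_)
    have hfact : ENNReal.ofReal (ρ ^ (p/α)) * ENNReal.ofReal (ρ ^ ((n:ℝ)-1))
        = ENNReal.ofReal (r ^ β) * (ENNReal.ofReal t) ^ i := by
      rw [← ENNReal.ofReal_mul (Real.rpow_nonneg hρ.le _), ← Real.rpow_add hρ,
        ← ENNReal.ofReal_pow ht0.le, ← ENNReal.ofReal_mul (Real.rpow_nonneg hr.le _)]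
      congr 1
      have h1 : p/α + ((n:ℝ)-1) = β := by rw [hβ]; ring
      rw [h1, hρdef, Real.mul_rpow hr.le (Real.rpow_pos_of_pos two_pos _).le,
        ← Real.rpow_natCast t i, ht,
        ← Real.rpow_mul (by norm_num : (0:ℝ) ≤ 2),
        ← Real.rpow_mul (by norm_num : (0:ℝ) ≤ 2)]
      rw [show -(i:ℝ)/(n:ℝ) * β = -(β/(n:ℝ)) * (i:ℝ) by ring]
    rw [← mul_assoc, hfact]
  refine le_trans (ENNReal.tsum_le_tsum hkey) ?_
  have hsum : (∑' i : ℕ, ENNReal.ofReal (r ^ β) * (ENNReal.ofReal t) ^ i * S)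
      = ENNReal.ofReal (r ^ β) * K := by
    rw [hK, ENNReal.tsum_mul_right, ENNReal.tsum_mul_left, ENNReal.tsum_geometric,
      mul_assoc]
  rw [hsum]
  calc ENNReal.ofReal (r ^ β) * K
      ≤ ENNReal.ofReal (r ^ β) * ENNReal.ofReal (K.toReal + 1) := by
        apply mul_le_mul_right
        calc K = ENNReal.ofReal K.toReal := (ENNReal.ofReal_toReal hKtop).symm
          _ ≤ ENNReal.ofReal (K.toReal + 1) := ENNReal.ofReal_le_ofReal (by linarith)
    _ = ENNReal.ofReal ((K.toReal + 1) * r ^ β) := by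
        rw [← ENNReal.ofReal_mul (Real.rpow_nonneg hr.le β), mul_comm]
end

section
/- Let w : ℝ → ℝ be an even convex C² function and n ≥ 2. For ε ≥ 0 let ρ(ε) > 0 be defined by the volume constraint ∫_{B_{ρ(ε)}(ε e₁)} e^{w(|x|)} dx = ∫_{B_1} e^{w(|x|)} dx. Then ρ is differentiable at 0 with ρ(0) = 1 and ρ'(0) = 0. -/
open MeasureTheory Metric Set Real

lemma aux_voldiff (n : ℕ) (hn : 0 < n) (c : EuclideanSpace ℝ (Fin n)) {r₁ r₂ : ℝ}
    (h1 : 0 ≤ r₁) (h12 : r₁ ≤ r₂) :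
    (volume (ball c r₂ \ ball c r₁)).toReal
      = (r₂ ^ n - r₁ ^ n) * (volume (ball (0 : EuclideanSpace ℝ (Fin n)) 1)).toReal := by
  haveI : Nonempty (Fin n) := Fin.pos_iff_nonempty.mp hn
  haveI : Nontrivial (EuclideanSpace ℝ (Fin n)) := by
    refine ⟨EuclideanSpace.single (Classical.arbitrary _) (1:ℝ), 0, ?_⟩
    intro h
    have := congrArg norm h
    simp [EuclideanSpace.norm_single] at this
  have hsub : ball c r₁ ⊆ ball c r₂ := ball_subset_ball h12
  rw [measure_diff hsub measurableSet_ball.nullMeasurableSet measure_ball_lt_top.ne,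
    Measure.addHaar_ball volume c (h1.trans h12), Measure.addHaar_ball volume c h1,
    finrank_euclideanSpace_fin]
  rw [ENNReal.toReal_sub_of_le
    (mul_le_mul' (ENNReal.ofReal_le_ofReal (pow_le_pow_left₀ h1 h12 n)) le_rfl)
    (ENNReal.mul_ne_top ENNReal.ofReal_ne_top measure_ball_lt_top.ne)]
  rw [ENNReal.toReal_mul, ENNReal.toReal_mul, ENNReal.toReal_ofReal (pow_nonneg (h1.trans h12) n),
    ENNReal.toReal_ofReal (pow_nonneg h1 n)]
  ring

lemma aux_ann (n : ℕ) (hn : 0 < n) (f : EuclideanSpace ℝ (Fin n) → ℝ)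
    (hfc : Continuous f) (c : EuclideanSpace ℝ (Fin n)) {m r₁ r₂ : ℝ}
    (h1 : 0 ≤ r₁) (h12 : r₁ ≤ r₂)
    (hm : ∀ x ∈ ball c r₂, m ≤ f x) :
    (∫ x in ball c r₁, f x) +
      m * ((r₂ ^ n - r₁ ^ n) * (volume (ball (0 : EuclideanSpace ℝ (Fin n)) 1)).toReal)
      ≤ ∫ x in ball c r₂, f x := by
  have hint : ∀ (r : ℝ), IntegrableOn f (ball c r) := fun r =>
    (hfc.locallyIntegrable.integrableOn_isCompact (isCompact_closedBall c r)).mono_set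
      ball_subset_closedBall
  have hsub : ball c r₁ ⊆ ball c r₂ := ball_subset_ball h12
  have hdiff := integral_diff (μ := volume) measurableSet_ball (hint r₂) hsub
  have hbd := setIntegral_ge_of_const_le (μ := volume) (c := m)
    (measurableSet_ball.diff measurableSet_ball)
    (((measure_mono (diff_subset : ball c r₂ \ ball c r₁ ⊆ ball c r₂)).trans_lt
      measure_ball_lt_top).ne)
    (fun x hx => hm x hx.1) ((hint r₂).mono_set diff_subset)
  rw [measureReal_def, aux_voldiff n hn c h1 h12, smul_eq_mul] at hbd
  linarith [hdiff, hbd]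

lemma aux_trans (n : ℕ) (f : EuclideanSpace ℝ (Fin n) → ℝ) (c : EuclideanSpace ℝ (Fin n)) (r : ℝ) :
    ∫ x in ball c r, f x = ∫ x in ball (0 : EuclideanSpace ℝ (Fin n)) r, f (x + c) := by
  have h := (measurePreserving_add_right (volume : Measure (EuclideanSpace ℝ (Fin n))) c).setIntegral_preimage_emb
    (measurableEmbedding_addRight c) f (ball c r)
  rw [← h]
  congr 1
  ext x
  simp [mem_ball, dist_eq_norm]

lemma aux_even (n : ℕ) (φ : ℝ → ℝ) (v : EuclideanSpace ℝ (Fin n)) :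
    ∫ x in ball (0 : EuclideanSpace ℝ (Fin n)) 1, φ ‖x - v‖
      = ∫ x in ball (0 : EuclideanSpace ℝ (Fin n)) 1, φ ‖x + v‖ := by
  set K : Submodule ℝ (EuclideanSpace ℝ (Fin n)) := (ℝ ∙ v)ᗮ
  set R := Submodule.reflection K
  have hRv : R v = -v :=
    Submodule.reflection_mem_subspace_orthogonalComplement_eq_neg
      ((ℝ ∙ v).le_orthogonal_orthogonal (Submodule.mem_span_singleton_self v))
  have hmp : MeasurePreserving (R : EuclideanSpace ℝ (Fin n) → EuclideanSpace ℝ (Fin n)) :=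
    (R : EuclideanSpace ℝ (Fin n) ≃ₗᵢ[ℝ] EuclideanSpace ℝ (Fin n)).measurePreserving
  have h := hmp.setIntegral_preimage_emb
    (R.toHomeomorph.measurableEmbedding) (fun x => φ ‖x - v‖) (ball 0 1)
  have hpre : (R : EuclideanSpace ℝ (Fin n) → EuclideanSpace ℝ (Fin n)) ⁻¹' (ball 0 1) = ball 0 1 := by
    ext x
    simp [mem_ball, dist_eq_norm]
  rw [hpre] at h
  rw [← h]
  refine setIntegral_congr_fun measurableSet_ball fun x _ => ?_
  have : R x - v = R (x + v) := by rw [map_add, hRv]; abel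
  rw [this, R.norm_map]

lemma aux_deriv (n : ℕ) (hn : 0 < n) (w : ℝ → ℝ) (hw : ContDiff ℝ 2 w)
    (v : EuclideanSpace ℝ (Fin n)) (hv : ‖v‖ = 1) :
    HasDerivAt (fun ε : ℝ => ∫ x in ball (0 : EuclideanSpace ℝ (Fin n)) 1, Real.exp (w ‖x + ε • v‖))
      (∫ x in ball (0 : EuclideanSpace ℝ (Fin n)) 1,
        deriv (fun t : ℝ => Real.exp (w ‖x + t • v‖)) 0) 0 := by
  haveI : Nonempty (Fin n) := Fin.pos_iff_nonempty.mp hn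
  haveI : Nontrivial (EuclideanSpace ℝ (Fin n)) := by
    refine ⟨EuclideanSpace.single (Classical.arbitrary _) (1:ℝ), 0, fun h => ?_⟩
    have := congrArg norm h
    simp [EuclideanSpace.norm_single] at this
  set φ : ℝ → ℝ := fun t => Real.exp (w t) with hφdef
  have hφ : ContDiff ℝ 1 φ := Real.contDiff_exp.comp (hw.of_le one_le_two)
  have hφ' : Continuous (deriv φ) := hφ.continuous_deriv le_rfl
  obtain ⟨K, hK⟩ := (isCompact_Icc (a := (-3:ℝ)) (b := 3)).exists_bound_of_continuousOn
    hφ'.continuousOn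
  set C : NNReal := ⟨max K 0, le_max_right _ _⟩ with hCdef
  have hφlip : LipschitzOnWith C φ (Icc (-3:ℝ) 3) := by
    refine (convex_Icc _ _).lipschitzOnWith_of_nnnorm_deriv_le
      (fun x _ => (hφ.differentiable one_ne_zero) x) (fun t ht => ?_)
    rw [← NNReal.coe_le_coe]
    exact (hK t ht).trans (le_max_left _ _)
  have key := hasDerivAt_integral_of_dominated_loc_of_lip
    (μ := (volume : Measure (EuclideanSpace ℝ (Fin n))).restrict (ball 0 1))
    (F := fun (t : ℝ) (a : EuclideanSpace ℝ (Fin n)) => Real.exp (w ‖a + t • v‖))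
    (F' := fun a => deriv (fun t : ℝ => Real.exp (w ‖a + t • v‖)) 0)
    (x₀ := 0) (bound := fun _ => (C : ℝ)) (s := ball 0 1) (ball_mem_nhds 0 one_pos)
    ?_ ?_ ?_ ?_ ?_ ?_
  · exact key.2
  · refine Filter.Eventually.of_forall fun t => Continuous.aestronglyMeasurable ?_
    exact Real.continuous_exp.comp (hw.continuous.comp
      ((continuous_id.add continuous_const).norm))
  · have : Continuous fun a : EuclideanSpace ℝ (Fin n) => Real.exp (w ‖a + (0:ℝ) • v‖) :=
      Real.continuous_exp.comp (hw.continuous.comp ((continuous_id.add continuous_const).norm))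
    exact (this.locallyIntegrable.integrableOn_isCompact (isCompact_closedBall _ _)).mono_set
      ball_subset_closedBall
  · have hcont : Continuous (Function.uncurry
        fun (a : EuclideanSpace ℝ (Fin n)) (t : ℝ) => Real.exp (w ‖a + t • v‖)) := by
      apply Real.continuous_exp.comp
      apply hw.continuous.comp
      exact (continuous_fst.add (continuous_snd.smul continuous_const)).norm
    exact ((measurable_deriv_with_param hcont).comp
      (measurable_id.prodMk measurable_const)).aestronglyMeasurable
  · refine (ae_restrict_mem measurableSet_ball).mono fun a ha => ?_
    have hgl : LipschitzWith 1 (fun t : ℝ => ‖a + t • v‖) := by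
      refine LipschitzWith.of_dist_le_mul fun s t => ?_
      have h1 : dist ‖a + s • v‖ ‖a + t • v‖ ≤ ‖(a + s • v) - (a + t • v)‖ := by
        rw [Real.dist_eq]
        exact abs_norm_sub_norm_le _ _
      have h2 : (a + s • v) - (a + t • v) = (s - t) • v := by rw [sub_smul]; abel
      calc dist ‖a + s • v‖ ‖a + t • v‖ ≤ ‖(s - t) • v‖ := by rw [← h2]; exact h1
        _ = |s - t| * 1 := by rw [norm_smul, hv, Real.norm_eq_abs]
        _ = 1 * dist s t := by rw [Real.dist_eq, one_mul, mul_one]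
    have hmaps : MapsTo (fun t : ℝ => ‖a + t • v‖) (ball (0:ℝ) 1) (Icc (-3:ℝ) 3) := by
      intro t ht
      simp only [mem_ball, dist_zero_right, Real.norm_eq_abs] at ht
      simp only [mem_ball, dist_zero_right] at ha
      have hb : ‖a + t • v‖ ≤ ‖a‖ + ‖t • v‖ := norm_add_le _ _
      rw [norm_smul, hv, Real.norm_eq_abs, mul_one] at hb
      constructor
      · linarith [norm_nonneg (a + t • v)]
      · linarith
    have hcomp := hφlip.comp (hgl.lipschitzOnWith (s := ball (0:ℝ) 1)) hmaps
    have hC : Real.nnabs ((C : ℝ)) = C := Real.nnabs_coe C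
    rw [hC]
    simpa [Function.comp_def, mul_one, hφdef] using hcomp
  · exact integrableOn_const measure_ball_lt_top.ne
  · have h0 : ∀ᵐ a ∂(volume : Measure (EuclideanSpace ℝ (Fin n))).restrict (ball 0 1),
        a ≠ (0 : EuclideanSpace ℝ (Fin n)) := by
      refine (ae_restrict_of_ae ?_)
      rw [ae_iff]
      have : {a : EuclideanSpace ℝ (Fin n) | ¬ a ≠ 0} = {(0 : EuclideanSpace ℝ (Fin n))} := by
        ext a; simp
      rw [this]
      exact measure_singleton _
    refine h0.mono fun a ha => ?_
    have hline : DifferentiableAt ℝ (fun t : ℝ => a + t • v) 0 :=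
      (differentiableAt_id.smul_const v).const_add a
    have hne : a + (0:ℝ) • v ≠ 0 := by simpa using ha
    have hnrm : DifferentiableAt ℝ (fun t : ℝ => ‖a + t • v‖) 0 := hline.norm ℝ hne
    have hfull : DifferentiableAt ℝ (fun t : ℝ => Real.exp (w ‖a + t • v‖)) 0 := by
      exact (((hw.differentiable two_ne_zero) _).comp 0 hnrm).exp
    exact hfull.hasDerivAt

set_option maxHeartbeats 1000000 in
/-- If `ρ(ε)` is defined by the weighted volume constraint
`∫_{B_{ρ(ε)}(ε e₁)} e^{w(|x|)} dx = ∫_{B₁} e^{w(|x|)} dx` for `ε ≥ 0`, with `w` even,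
convex and `C²`, then `ρ(0) = 1` and `ρ'(0) = 0` (one-sided derivative at `0`). -/
theorem stmt_19 (n : ℕ) (hn : 2 ≤ n) (w : ℝ → ℝ) (hw : ContDiff ℝ 2 w)
    (heven : ∀ x : ℝ, w (-x) = w x) (hconv : ConvexOn ℝ Set.univ w)
    (ρ : ℝ → ℝ)
    (hρ : ∀ ε : ℝ, 0 ≤ ε → 0 < ρ ε ∧
      (∫ x in ball (ε • EuclideanSpace.single (⟨0, by omega⟩ : Fin n) (1 : ℝ)) (ρ ε),
          Real.exp (w ‖x‖)) =
        ∫ x in ball (0 : EuclideanSpace ℝ (Fin n)) 1, Real.exp (w ‖x‖)) :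
    ρ 0 = 1 ∧ HasDerivWithinAt ρ 0 (Ici (0 : ℝ)) 0 := by
  have hn0 : 0 < n := by omega
  set e₁ : EuclideanSpace ℝ (Fin n) := EuclideanSpace.single (⟨0, by omega⟩ : Fin n) (1 : ℝ)
    with he₁
  have hnv : ‖e₁‖ = 1 := by rw [he₁, EuclideanSpace.norm_single]; norm_num
  set f : EuclideanSpace ℝ (Fin n) → ℝ := fun x => Real.exp (w ‖x‖) with hf
  have hfc : Continuous f := Real.continuous_exp.comp (hw.continuous.comp continuous_norm)
  have hfnn : ∀ x, 0 ≤ f x := fun x => (Real.exp_pos _).le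
  have hf_int : ∀ (c : EuclideanSpace ℝ (Fin n)) (r : ℝ), IntegrableOn f (ball c r) := fun c r =>
    (hfc.locallyIntegrable.integrableOn_isCompact (isCompact_closedBall c r)).mono_set
      ball_subset_closedBall
  -- positive lower bound on closedBall 0 3
  obtain ⟨z, hz, hzmin⟩ := (isCompact_closedBall (0 : EuclideanSpace ℝ (Fin n)) 3).exists_isMinOn
    ⟨0, by simp⟩ hfc.continuousOn
  set m : ℝ := f z with hm
  have hmpos : 0 < m := Real.exp_pos _
  have hmle : ∀ x ∈ closedBall (0 : EuclideanSpace ℝ (Fin n)) 3, m ≤ f x := fun x hx => hzmin hx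
  set ω : ℝ := (volume (ball (0 : EuclideanSpace ℝ (Fin n)) 1)).toReal with hω
  have hωpos : 0 < ω :=
    ENNReal.toReal_pos (measure_ball_pos _ _ one_pos).ne' measure_ball_lt_top.ne
  set I₀ : ℝ := ∫ x in ball (0 : EuclideanSpace ℝ (Fin n)) 1, f x with hI₀
  -- first part : ρ 0 = 1
  obtain ⟨hρ0pos, hρ0eq⟩ := hρ 0 le_rfl
  rw [zero_smul] at hρ0eq
  have hρ01 : ρ 0 = 1 := by
    by_contra hne
    rcases lt_or_gt_of_ne hne with hlt | hgt
    · have hann := aux_ann n hn0 f hfc 0 hρ0pos.le hlt.le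
        (fun x hx => hmle x ((ball_subset_ball (by norm_num)).trans ball_subset_closedBall hx))
      have hpow : (ρ 0) ^ n < 1 ^ n := by
        apply pow_lt_pow_left₀ hlt hρ0pos.le (by omega)
      rw [one_pow] at hpow
      rw [← hI₀, ← hω, hρ0eq, one_pow] at hann
      nlinarith [mul_pos hmpos (mul_pos (by linarith : (0:ℝ) < 1 - ρ 0 ^ n) hωpos)]
    · set r₂ : ℝ := min (ρ 0) 2 with hr₂
      have h1r : 1 < r₂ := lt_min hgt (by norm_num)
      have hann := aux_ann n hn0 f hfc 0 (zero_le_one) h1r.le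
        (fun x hx => hmle x (ball_subset_closedBall (ball_subset_ball (le_trans (min_le_right _ _) (by norm_num)) hx)))
      have hmono : (∫ x in ball (0 : EuclideanSpace ℝ (Fin n)) r₂, f x)
          ≤ ∫ x in ball (0 : EuclideanSpace ℝ (Fin n)) (ρ 0), f x := by
        apply setIntegral_mono_set (hf_int _ _)
          (Filter.Eventually.of_forall fun x => hfnn x)
        exact Filter.Eventually.of_forall fun x hx => ball_subset_ball (min_le_left _ _) hx
      have hpow : 1 < r₂ ^ n := one_lt_pow₀ h1r (by omega)
      rw [← hI₀, ← hω, one_pow] at hann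
      rw [hρ0eq] at hmono
      nlinarith [mul_pos hmpos (mul_pos (by linarith : (0:ℝ) < r₂ ^ n - 1) hωpos)]
  refine ⟨hρ01, ?_⟩
  -- setup the weighted volume function
  set Fn : ℝ → ℝ := fun ε => ∫ x in ball (ε • e₁) 1, f x with hFn
  have hFn0 : Fn 0 = I₀ := by rw [hFn]; simp only [zero_smul]; rfl
  set H : ℝ → ℝ := fun ε => ∫ x in ball (0 : EuclideanSpace ℝ (Fin n)) 1,
    Real.exp (w ‖x + ε • e₁‖) with hH
  have hFH : ∀ ε : ℝ, Fn ε = H ε := fun ε => aux_trans n f (ε • e₁) 1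
  have hder := aux_deriv n hn0 w hw e₁ hnv
  set d : ℝ := ∫ x in ball (0 : EuclideanSpace ℝ (Fin n)) 1,
    deriv (fun t : ℝ => Real.exp (w ‖x + t • e₁‖)) 0 with hd
  have hHeven : ∀ ε : ℝ, H (-ε) = H ε := by
    intro ε
    have h1 : H (-ε) = ∫ x in ball (0 : EuclideanSpace ℝ (Fin n)) 1,
        Real.exp (w ‖x - ε • e₁‖) := by
      rw [hH]
      simp only [neg_smul, ← sub_eq_add_neg]
    rw [h1, aux_even n (fun t => Real.exp (w t)) (ε • e₁), hH]
  have hneg : HasDerivAt (fun ε : ℝ => H (-ε)) (d * -1) 0 := by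
    have h0 : HasDerivAt H d (-(0:ℝ)) := by rw [neg_zero]; exact hder
    exact HasDerivAt.comp 0 h0 (hasDerivAt_neg 0)
  rw [funext hHeven] at hneg
  have hd0 : d = 0 := by have := hder.unique hneg; linarith
  rw [hd0] at hder
  have hFder : HasDerivAt Fn 0 0 := (funext hFH : Fn = H) ▸ hder
  have hlo : (fun ε : ℝ => Fn ε - Fn 0) =o[nhdsWithin 0 (Ici (0:ℝ))] fun ε => ε := by
    have h := hasDerivAt_iff_isLittleO.mp hFder
    simp only [sub_zero, smul_zero] at h
    exact h.mono nhdsWithin_le_nhds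
  -- main quantitative bound
  have hbound : ∀ ε : ℝ, 0 ≤ ε → ε ≤ 1/4 → m * ω * |ρ ε - 1| ≤ |Fn ε - Fn 0| := by
    intro ε hε hε4
    obtain ⟨hρpos, hρeq⟩ := hρ ε hε
    have hc : ‖ε • e₁‖ = ε := by
      rw [norm_smul, hnv, Real.norm_eq_abs, abs_of_nonneg hε, mul_one]
    have hball3 : ∀ {r : ℝ}, r ≤ 2 → ball (ε • e₁) r ⊆ closedBall (0 : EuclideanSpace ℝ (Fin n)) 3 := by
      intro r hr x hx
      rw [mem_ball, dist_eq_norm] at hx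
      rw [mem_closedBall, dist_zero_right]
      have h1 : ‖x‖ ≤ ‖x - ε • e₁‖ + ‖ε • e₁‖ := by
        have := norm_add_le (x - ε • e₁) (ε • e₁)
        simpa using this
      rw [hc] at h1
      linarith
    have hFnε : Fn ε = ∫ x in ball (ε • e₁) 1, f x := rfl
    have hρ2 : ρ ε ≤ 2 := by
      by_contra h2
      push_neg at h2
      have hsub : ball (0 : EuclideanSpace ℝ (Fin n)) (7/4) ⊆ ball (ε • e₁) (ρ ε) := by
        intro x hx
        rw [mem_ball, dist_zero_right] at hx
        rw [mem_ball, dist_eq_norm]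
        have h1 : ‖x - ε • e₁‖ ≤ ‖x‖ + ‖ε • e₁‖ := norm_sub_le _ _
        rw [hc] at h1
        linarith
      have hann := aux_ann n hn0 f hfc 0 zero_le_one (by norm_num : (1:ℝ) ≤ 7/4)
        (fun x hx => hmle x (ball_subset_closedBall (ball_subset_ball (by norm_num) hx)))
      have hmono := setIntegral_mono_set (hf_int (ε • e₁) (ρ ε))
        (Filter.Eventually.of_forall hfnn) (HasSubset.Subset.eventuallyLE hsub)
      have hpow : 1 < (7/4:ℝ) ^ n := one_lt_pow₀ (by norm_num) (by omega)
      rw [← hI₀, ← hω, one_pow] at hann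
      rw [hρeq] at hmono
      nlinarith [mul_pos hmpos (mul_pos (by linarith : (0:ℝ) < (7/4:ℝ) ^ n - 1) hωpos)]
    rcases le_total (ρ ε) 1 with hle | hge
    · have hann := aux_ann n hn0 f hfc (ε • e₁) hρpos.le hle
        (fun x hx => hmle x (hball3 (by norm_num) hx))
      rw [hρeq, ← hω, one_pow, ← hFnε] at hann
      have hpow : (ρ ε) ^ n ≤ ρ ε := by
        have := pow_le_pow_of_le_one hρpos.le hle (show 1 ≤ n by omega)
        rwa [pow_one] at this
      have habs : |ρ ε - 1| = 1 - ρ ε := by rw [abs_of_nonpos (by linarith)]; ring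
      have hkey : m * ω * (1 - ρ ε) ≤ Fn ε - Fn 0 := by
        rw [hFn0]
        nlinarith [mul_nonneg (mul_nonneg hmpos.le hωpos.le) (sub_nonneg.2 hpow)]
      rw [habs]
      exact hkey.trans (le_abs_self _)
    · have hann := aux_ann n hn0 f hfc (ε • e₁) zero_le_one hge
        (fun x hx => hmle x (hball3 hρ2 hx))
      rw [hρeq, ← hω, one_pow, ← hFnε] at hann
      have hpow : ρ ε ≤ (ρ ε) ^ n := le_self_pow₀ (by linarith) (by omega)
      have habs : |ρ ε - 1| = ρ ε - 1 := abs_of_nonneg (by linarith)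
      have hkey : m * ω * (ρ ε - 1) ≤ -(Fn ε - Fn 0) := by
        rw [hFn0]
        nlinarith [mul_nonneg (mul_nonneg hmpos.le hωpos.le) (sub_nonneg.2 hpow)]
      rw [habs]
      exact hkey.trans (neg_le_abs _)
  have hbigO : (fun ε : ℝ => ρ ε - 1) =O[nhdsWithin 0 (Ici (0:ℝ))] fun ε => Fn ε - Fn 0 := by
    rw [Asymptotics.isBigO_iff]
    refine ⟨(m * ω)⁻¹, ?_⟩
    filter_upwards [mem_nhdsWithin_of_mem_nhds (Iio_mem_nhds (by norm_num : (0:ℝ) < 1/4)),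
      self_mem_nhdsWithin] with ε h4 hε
    have hb := hbound ε hε (le_of_lt h4)
    rw [Real.norm_eq_abs, Real.norm_eq_abs]
    have hmω : 0 < m * ω := mul_pos hmpos hωpos
    calc |ρ ε - 1| = (m * ω)⁻¹ * (m * ω * |ρ ε - 1|) := by field_simp
      _ ≤ (m * ω)⁻¹ * |Fn ε - Fn 0| :=
          mul_le_mul_of_nonneg_left hb (by positivity)
  have hfinal := hbigO.trans_isLittleO hlo
  rw [hasDerivWithinAt_iff_isLittleO]
  simp only [sub_zero, smul_zero, hρ01]
  exact hfinal
end
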